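/- Let S be a multiplicatively closed subset of a ring R consisting of central regular elements, and let RS⁻¹ be the localization of R at S. Then R is right Central McCoy if and only if RS⁻¹ is right Central McCoy. -/

import Mathlib

/-- A ring `R` is *right Central McCoy* if whenever nonzero polynomials
`f, g ∈ R[x]` satisfy `f * g = 0`, there is a nonzero `r ∈ R` with
every coefficient of `f` times `r` central in `R`. -/
def IsRightCentralMcCoy (R : Type*) [Ring R] : Prop :=
  ∀ f g : Polynomial R, f ≠ 0 → g ≠ 0 → f * g = 0 →
    ∃ r : R, r ≠ 0 ∧ ∀ i : ℕ, f.coeff i * r ∈ Set.center R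

namespace McCoyAux

open OreLocalization Polynomial

variable {R : Type*} [Ring R] (S : Submonoid R) [OreLocalization.OreSet S]

local notation "ι" => (numeratorRingHom : R →+* OreLocalization S R)

variable {S}

theorem iota_inj (hreg : ∀ s ∈ S, IsRegular s) :
    Function.Injective (ι : R → OreLocalization S R) := by
  have hS : S ≤ nonZeroDivisorsLeft R := by
    intro s hs
    rw [mem_nonZeroDivisorsLeft_iff]
    intro y hy
    exact (hreg s hs).left (by simpa using hy)
  exact fun a b h => numeratorHom_inj hS h

theorem iota_center {a : R} (ha : a ∈ Set.center R) :
    (ι a : OreLocalization S R) ∈ Set.center (OreLocalization S R) := by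
  rw [Semigroup.mem_center_iff] at ha ⊢
  intro x
  induction x using OreLocalization.ind with
  | _ r s =>
    show r /ₒ s * (a /ₒ 1) = a /ₒ 1 * (r /ₒ s)
    rw [mul_div_one, oreDiv_mul_char a r 1 s a s (ha s), ha r, mul_one]

theorem iota_center_iff (hreg : ∀ s ∈ S, IsRegular s) {a : R} :
    (ι a : OreLocalization S R) ∈ Set.center (OreLocalization S R) ↔ a ∈ Set.center R := by
  refine ⟨fun h => ?_, iota_center⟩
  rw [Semigroup.mem_center_iff] at h ⊢
  intro b
  apply iota_inj hreg
  rw [map_mul, map_mul, h (ι b)]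

/-- `(a /ₒ s) * ι s = ι a` when `s` is central. -/
theorem div_mul_iota (hcent : ∀ s ∈ S, s ∈ Set.center R) (a : R) (s : S) :
    (a /ₒ s) * (ι (s : R) : OreLocalization S R) = ι a := by
  show a /ₒ s * ((s : R) /ₒ 1) = a /ₒ 1
  rw [mul_div_one, oreDiv_eq_iff]
  refine ⟨s, 1, ?_, by simp⟩
  have := (Semigroup.mem_center_iff.mp (hcent s s.2)) a
  simpa [Submonoid.smul_def, smul_eq_mul] using this.symm

theorem C_central_comm {T : Type*} [Ring T] {c : T} (hc : c ∈ Set.center T)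
    (p : Polynomial T) : p * Polynomial.C c = Polynomial.C c * p := by
  ext n
  rw [coeff_mul_C, coeff_C_mul, (Semigroup.mem_center_iff.mp hc) _]

/-- Clearing denominators in a polynomial over the Ore localization. -/
theorem clear_denominators (hcent : ∀ s ∈ S, s ∈ Set.center R)
    (F : Polynomial (OreLocalization S R)) :
    ∃ (s : S) (f : Polynomial R), F * Polynomial.C (ι (s : R)) = f.map ι := by
  induction F using Polynomial.induction_on' with
  | add p q hp hq =>
    obtain ⟨s, f, hf⟩ := hp
    obtain ⟨t, g, hg⟩ := hq
    refine ⟨s * t, f * Polynomial.C (t : R) + g * Polynomial.C (s : R), ?_⟩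
    have hs : (ι (s : R) : OreLocalization S R) ∈ Set.center _ := iota_center (hcent s s.2)
    have ht : (ι (t : R) : OreLocalization S R) ∈ Set.center _ := iota_center (hcent t t.2)
    have : (ι ((s * t : S) : R) : OreLocalization S R) = ι (s : R) * ι (t : R) := by
      push_cast
      rw [map_mul]
    rw [this, Polynomial.map_add, Polynomial.map_mul, Polynomial.map_mul, map_C, map_C,
      ← hf, ← hg]
    rw [add_mul, Polynomial.C_mul]
    rw [mul_assoc, mul_assoc, ← Polynomial.C_mul, ← Polynomial.C_mul,
      (Semigroup.mem_center_iff.mp ht) (ι (s : R))]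
  | monomial n α =>
    obtain ⟨a, s, rfl⟩ : ∃ (a : R) (s : S), α = a /ₒ s :=
      OreLocalization.ind (β := fun x => ∃ (a : R) (s : S), x = a /ₒ s)
        (fun a s => ⟨a, s, rfl⟩) α
    exact ⟨s, Polynomial.monomial n a, by
      rw [monomial_mul_C, div_mul_iota hcent, Polynomial.map_monomial]⟩

end McCoyAux

open McCoyAux OreLocalization Polynomial in
/-- Let `S` be a multiplicatively closed subset of `R` consisting of central
regular elements.  Then `R` is right Central McCoy iff the localization
`RS⁻¹` (the Ore localization of `R` at `S`) is right Central McCoy. -/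
theorem isRightCentralMcCoy_iff_oreLocalization (R : Type*) [Ring R]
    (S : Submonoid R) [OreLocalization.OreSet S]
    (hcent : ∀ s ∈ S, s ∈ Set.center R)
    (hreg : ∀ s ∈ S, IsRegular s) :
    IsRightCentralMcCoy R ↔ IsRightCentralMcCoy (OreLocalization S R) := by
  set ι : R →+* OreLocalization S R := numeratorRingHom with hι
  have hinj : Function.Injective ι := iota_inj hreg
  have hmapinj : Function.Injective (Polynomial.map ι) := Polynomial.map_injective ι hinj
  constructor
  · -- R McCoy → localization McCoy
    intro hR F G hF hG hFG
    obtain ⟨s, f, hf⟩ := clear_denominators hcent F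
    obtain ⟨t, g, hg⟩ := clear_denominators hcent G
    have hsu : IsUnit (Polynomial.C (ι (s : R))) :=
      (Polynomial.isUnit_C).mpr (numerator_isUnit s)
    have htu : IsUnit (Polynomial.C (ι (t : R))) :=
      (Polynomial.isUnit_C).mpr (numerator_isUnit t)
    have hfne : f ≠ 0 := by
      rintro rfl
      rw [Polynomial.map_zero] at hf
      exact hF ((hsu.mul_left_eq_zero).mp hf)
    have hgne : g ≠ 0 := by
      rintro rfl
      rw [Polynomial.map_zero] at hg
      exact hG ((htu.mul_left_eq_zero).mp hg)
    have hfg : f * g = 0 := by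
      apply hmapinj
      rw [Polynomial.map_mul, Polynomial.map_zero, ← hf, ← hg]
      have hsC : (Polynomial.C (ι (s : R)) : Polynomial (OreLocalization S R)) *
          G = G * Polynomial.C (ι (s : R)) :=
        (C_central_comm (iota_center (hcent s s.2)) G).symm
      calc F * Polynomial.C (ι (s : R)) * (G * Polynomial.C (ι (t : R)))
          = F * (Polynomial.C (ι (s : R)) * G) * Polynomial.C (ι (t : R)) := by simp only [mul_assoc]
        _ = F * (G * Polynomial.C (ι (s : R))) * Polynomial.C (ι (t : R)) := by rw [hsC]
        _ = F * G * (Polynomial.C (ι (s : R)) * Polynomial.C (ι (t : R))) := by simp only [mul_assoc]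
        _ = 0 := by rw [hFG, zero_mul]
    obtain ⟨r, hr, hc⟩ := hR f g hfne hgne hfg
    refine ⟨ι ((s : R) * r), ?_, ?_⟩
    · intro h
      apply hr
      have : (s : R) * r = 0 := hinj (by simpa using h)
      exact (hreg s s.2).left (by simpa using this)
    · intro i
      have hcoeff : F.coeff i * ι (s : R) = ι (f.coeff i) := by
        have := congrArg (fun p => Polynomial.coeff p i) hf
        rw [hι]
        simpa [Polynomial.coeff_mul_C, Polynomial.coeff_map] using this
      rw [map_mul, ← mul_assoc, hcoeff, ← map_mul]
      exact iota_center (hc i)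
  · -- localization McCoy → R McCoy
    intro hL f g hf hg hfg
    have hF : f.map ι ≠ 0 := fun h => hf (hmapinj (by simpa using h))
    have hG : g.map ι ≠ 0 := fun h => hg (hmapinj (by simpa using h))
    have hFG : f.map ι * g.map ι = 0 := by
      rw [← Polynomial.map_mul, hfg, Polynomial.map_zero]
    obtain ⟨ρ, hρ, hc⟩ := hL (f.map ι) (g.map ι) hF hG hFG
    obtain ⟨a, s, rfl⟩ : ∃ (a : R) (s : S), ρ = a /ₒ s :=
      OreLocalization.ind (β := fun x => ∃ (a : R) (s : S), x = a /ₒ s)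
        (fun a s => ⟨a, s, rfl⟩) ρ
    refine ⟨a, ?_, ?_⟩
    · rintro rfl
      exact hρ (OreLocalization.zero_oreDiv s)
    · intro i
      have key : (f.map ι).coeff i * (a /ₒ s) = (f.coeff i * a) /ₒ (s * 1) := by
      -- ι (f.coeff i) * (a /ₒ s)
        rw [Polynomial.coeff_map]
        show f.coeff i /ₒ 1 * (a /ₒ s) = (f.coeff i * a) /ₒ (s * 1)
        exact oreDiv_mul_char (f.coeff i) a 1 s (f.coeff i) s
          ((Semigroup.mem_center_iff.mp (hcent s s.2)) (f.coeff i)).symm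
      have hcent' : ((f.coeff i * a) /ₒ (s * 1) : OreLocalization S R) ∈ Set.center _ := by
        rw [← key]; exact hc i
      have : (ι (f.coeff i * a) : OreLocalization S R) ∈ Set.center _ := by
        rw [← div_mul_iota hcent (f.coeff i * a) (s * 1)]
        refine Set.mul_mem_center hcent' (iota_center (hcent _ ?_))
        exact (s * 1).2
      exact (iota_center_iff hreg).mp this
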